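/- Let Ω be a finite set with weights w(x) > 0 for x ∈ Ω, and for subsets S ⊆ Ω write w(S) = Σ_{x∈S} w(x). Let m ≥ 1 and let (X_{x,k})_{x∈Ω, 1≤k≤m} be independent random variables with X_{x,k} Exp(w(x))-distributed. For nonempty subsets A, B ⊆ Ω and each position k set A_k = min_{x∈A} X_{x,k} and B_k = min_{x∈B} X_{x,k}. Then: (i) if A ⊆ B, then B_k ≤ A_k for every k surely; (ii) if A is not contained in B, then P(there exists k with B_k > A_k) = 1 − (w(B)/w(A ∪ B))^m, and in particular this probability is strictly positive. -/

import Mathlib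

open MeasureTheory ProbabilityTheory Real Set

namespace Stmt9Aux

lemma measurable_finset_inf' {W α : Type*} [MeasurableSpace W] {s : Finset α} (hs : s.Nonempty)
    (f : α → W → ℝ) (hf : ∀ x, Measurable (f x)) :
    Measurable (fun ω => s.inf' hs (fun x => f x ω)) := by
  induction hs using Finset.Nonempty.cons_induction with
  | singleton a => simpa using hf a
  | cons a s ha hs ih =>
      have : (fun ω => (s.cons a ha).inf' (Finset.cons_nonempty ha) fun x => f x ω)
          = fun ω => min (f a ω) (s.inf' hs fun x => f x ω) := by
        funext ω; rw [Finset.inf'_cons]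
      rw [this]; exact (hf a).min ih

lemma expMeasure_Iic {r : ℝ} (hr : 0 < r) (t : ℝ) :
    expMeasure r (Iic t) = ENNReal.ofReal (if 0 ≤ t then 1 - rexp (-(r * t)) else 0) := by
  have := isProbabilityMeasure_expMeasure hr
  rw [← ofReal_cdf (expMeasure r) t]
  congr 1
  rw [cdf_expMeasure_eq hr t]

lemma expMeasure_Ioi {r : ℝ} (hr : 0 < r) (t : ℝ) :
    expMeasure r (Ioi t) = ENNReal.ofReal (rexp (-(r * max t 0))) := by
  have := isProbabilityMeasure_expMeasure hr
  rw [show Ioi t = (Iic t)ᶜ from (compl_Iic (a := t)).symm,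
    measure_compl measurableSet_Iic (measure_ne_top _ _), measure_univ, expMeasure_Iic hr]
  by_cases ht : 0 ≤ t
  · have h1 : 0 ≤ 1 - rexp (-(r * t)) := by
      have : rexp (-(r * t)) ≤ 1 := exp_le_one_iff.mpr (by nlinarith)
      linarith
    rw [if_pos ht, max_eq_left ht, ← ENNReal.ofReal_one, ← ENNReal.ofReal_sub _ h1]
    norm_num
  · rw [if_neg ht, max_eq_right (le_of_not_ge ht)]
    simp

lemma expMeasure_singleton (r x : ℝ) : expMeasure r {x} = 0 := by
  rw [expMeasure, gammaMeasure, withDensity_apply _ (measurableSet_singleton x)]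
  simp [Measure.restrict_singleton]

lemma expMeasure_Ici {r : ℝ} (hr : 0 < r) (t : ℝ) :
    expMeasure r (Ici t) = ENNReal.ofReal (rexp (-(r * max t 0))) := by
  have h : expMeasure r (Ici t) = expMeasure r (Ioi t) := by
    refine le_antisymm ?_ (measure_mono Ioi_subset_Ici_self)
    rw [← Set.Ioi_union_left]
    refine (measure_union_le _ _).trans ?_
    simp [expMeasure_singleton]
  rw [h, expMeasure_Ioi hr]


lemma inf'_attach_eq {α : Type*} (S : Finset α) (hS : S.Nonempty) (g : α → ℝ) :
    S.attach.inf' hS.attach (fun i => g i) = S.inf' hS g := by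
  refine le_antisymm (Finset.le_inf'_iff _ _ |>.mpr fun b hb => Finset.inf'_le _ (Finset.mem_attach _ ⟨b, hb⟩)) (Finset.le_inf'_iff _ _ |>.mpr fun i _ => Finset.inf'_le _ i.2)

variable {Ω : Type*} [MeasurableSpace Ω] {P : Measure Ω} [IsProbabilityMeasure P]
    {ι κ : Type*} {w : ι → ℝ}
    {X : ι → κ → Ω → ℝ}

/-- The pairing embedding. -/
def pe (k : κ) : ι ↪ ι × κ := ⟨fun x => (x, k), fun a b h => congrArg Prod.fst h⟩

lemma law_min (hmeas : ∀ x k, Measurable (X x k))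
    (hindep : iIndepFun (fun p : ι × κ => X p.1 p.2) P)
    (hdist : ∀ x k, Measure.map (X x k) P = expMeasure (w x))
    (hw : ∀ x, 0 < w x) (S : Finset ι) (hS : S.Nonempty) (k : κ) :
    Measure.map (fun ω => S.inf' hS fun x => X x k ω) P = expMeasure (∑ x ∈ S, w x) := by
  have hσ : 0 < ∑ x ∈ S, w x := Finset.sum_pos (fun x _ => hw x) hS
  haveI := isProbabilityMeasure_expMeasure hσ
  have hM : Measurable (fun ω => S.inf' hS fun x => X x k ω) :=
    measurable_finset_inf' hS _ (fun x => hmeas x k)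
  haveI : IsProbabilityMeasure (P.map (fun ω => S.inf' hS fun x => X x k ω)) :=
    Measure.isProbabilityMeasure_map hM.aemeasurable
  have hIoi : ∀ t : ℝ, P ((fun ω => S.inf' hS fun x => X x k ω) ⁻¹' Ioi t)
      = ENNReal.ofReal (rexp (-((∑ x ∈ S, w x) * max t 0))) := by
    intro t
    have hpre : (fun ω => S.inf' hS fun x => X x k ω) ⁻¹' Ioi t
        = ⋂ p ∈ S.map (pe k), X p.1 p.2 ⁻¹' Ioi t := by
      ext ω
      simp only [mem_preimage, mem_Ioi, Finset.lt_inf'_iff, Set.mem_iInter, Finset.mem_map]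
      constructor
      · rintro h p ⟨x, hx, rfl⟩
        exact h x hx
      · intro h x hx
        exact h (pe k x) ⟨x, hx, rfl⟩
    rw [hpre, hindep.meas_biInter (fun p _ => ⟨Ioi t, measurableSet_Ioi, rfl⟩),
      Finset.prod_map]
    have hterm : ∀ x ∈ S, P ((fun ω => X ((pe k) x).1 ((pe k) x).2 ω) ⁻¹' Ioi t)
        = ENNReal.ofReal (rexp (-(w x * max t 0))) := by
      intro x _
      rw [show ((pe (ι := ι) k) x) = (x, k) from rfl]
      rw [← Measure.map_apply (hmeas x k) measurableSet_Ioi, hdist x k, expMeasure_Ioi (hw x)]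
    rw [Finset.prod_congr rfl hterm,
      ← ENNReal.ofReal_prod_of_nonneg (fun x _ => (exp_pos _).le), ← Real.exp_sum]
    congr 2
    rw [Finset.sum_neg_distrib, Finset.sum_mul]
  refine Measure.ext_of_Iic _ _ fun t => ?_
  rw [Measure.map_apply hM measurableSet_Iic,
    show (Iic t : Set ℝ) = (Ioi t)ᶜ from (compl_Ioi (a := t)).symm, preimage_compl,
    measure_compl (hM measurableSet_Ioi) (measure_ne_top _ _), measure_univ, hIoi t,
    measure_compl measurableSet_Ioi (measure_ne_top _ _), measure_univ, expMeasure_Ioi hσ]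

lemma indep_min (hmeas : ∀ x k, Measurable (X x k))
    (hindep : iIndepFun (fun p : ι × κ => X p.1 p.2) P)
    (S T : Finset ι) (hS : S.Nonempty) (hT : T.Nonempty) (hST : Disjoint S T) (k : κ) :
    IndepFun (fun ω => S.inf' hS fun x => X x k ω) (fun ω => T.inf' hT fun x => X x k ω) P := by
  have h0 := hindep.indepFun_finset (S.map (pe k)) (T.map (pe k))
    ((Finset.disjoint_map (pe k)).mpr hST) (fun p => hmeas p.1 p.2)
  have h1 := h0.comp
    (φ := fun v : (↥(S.map (pe k)) → ℝ) => (S.map (pe k)).attach.inf' (hS.map.attach) (fun i => v i))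
    (ψ := fun v : (↥(T.map (pe k)) → ℝ) => (T.map (pe k)).attach.inf' (hT.map.attach) (fun i => v i))
    (measurable_finset_inf' _ _ (fun i => measurable_pi_apply i))
    (measurable_finset_inf' _ _ (fun i => measurable_pi_apply i))
  convert h1 using 1 <;> funext ω
  · rw [Function.comp_apply, inf'_attach_eq (S.map (pe k)) hS.map
      (fun p => X p.1 p.2 ω), Finset.inf'_map]
    rfl
  · rw [Function.comp_apply, inf'_attach_eq (T.map (pe k)) hT.map
      (fun p => X p.1 p.2 ω), Finset.inf'_map]
    rfl


lemma prob_min_le (hmeas : ∀ x k, Measurable (X x k))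
    (hindep : iIndepFun (fun p : ι × κ => X p.1 p.2) P)
    (hdist : ∀ x k, Measure.map (X x k) P = expMeasure (w x))
    (hw : ∀ x, 0 < w x)
    (S T : Finset ι) (hS : S.Nonempty) (hT : T.Nonempty) (hST : Disjoint S T) (k : κ) :
    P {ω | S.inf' hS (fun x => X x k ω) ≤ T.inf' hT (fun x => X x k ω)}
      = ENNReal.ofReal ((∑ x ∈ S, w x) / ((∑ x ∈ S, w x) + (∑ x ∈ T, w x))) := by
  have hβ : 0 < ∑ x ∈ S, w x := Finset.sum_pos (fun x _ => hw x) hS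
  have hγ : 0 < ∑ x ∈ T, w x := Finset.sum_pos (fun x _ => hw x) hT
  set β := ∑ x ∈ S, w x
  set γ := ∑ x ∈ T, w x
  have hMS : Measurable (fun ω => S.inf' hS fun x => X x k ω) :=
    measurable_finset_inf' hS _ (fun x => hmeas x k)
  have hMT : Measurable (fun ω => T.inf' hT fun x => X x k ω) :=
    measurable_finset_inf' hT _ (fun x => hmeas x k)
  have hsle : MeasurableSet {p : ℝ × ℝ | p.1 ≤ p.2} :=
    measurableSet_le measurable_fst measurable_snd
  have hmapeq := (indepFun_iff_map_prod_eq_prod_map_map hMS.aemeasurable hMT.aemeasurable).mp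
    (indep_min hmeas hindep S T hS hT hST k)
  have hset : {ω | S.inf' hS (fun x => X x k ω) ≤ T.inf' hT (fun x => X x k ω)}
      = (fun ω => (S.inf' hS (fun x => X x k ω), T.inf' hT (fun x => X x k ω))) ⁻¹'
        {p : ℝ × ℝ | p.1 ≤ p.2} := rfl
  rw [hset, ← Measure.map_apply (hMS.prodMk hMT) hsle, hmapeq,
    law_min hmeas hindep hdist hw S hS k, law_min hmeas hindep hdist hw T hT k]
  haveI := isProbabilityMeasure_expMeasure hβ
  haveI := isProbabilityMeasure_expMeasure hγ
  rw [Measure.prod_apply hsle]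
  have hfib : ∀ x : ℝ, expMeasure γ (Prod.mk x ⁻¹' {p : ℝ × ℝ | p.1 ≤ p.2})
      = ENNReal.ofReal (rexp (-(γ * max x 0))) := by
    intro x
    have : (Prod.mk x ⁻¹' {p : ℝ × ℝ | p.1 ≤ p.2}) = Ici x := rfl
    rw [this, expMeasure_Ici hγ]
  rw [lintegral_congr hfib]
  rw [show expMeasure β = volume.withDensity (exponentialPDF β) from rfl]
  rw [lintegral_withDensity_eq_lintegral_mul _
      (show Measurable (exponentialPDF β) from (measurable_exponentialPDFReal β).ennreal_ofReal)
      (show Measurable (fun x : ℝ => ENNReal.ofReal (rexp (-(γ * max x 0)))) by measurability)]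
  have hpoint : ∀ x : ℝ,
      (exponentialPDF β * fun x => ENNReal.ofReal (rexp (-(γ * max x 0)))) x
        = ENNReal.ofReal (β / (β + γ)) * exponentialPDF (β + γ) x := by
    intro x
    rcases le_or_gt 0 x with hx | hx
    · simp only [Pi.mul_apply]
      rw [exponentialPDF_of_nonneg hx, exponentialPDF_of_nonneg hx, max_eq_left hx,
        ← ENNReal.ofReal_mul (by positivity), ← ENNReal.ofReal_mul (by positivity)]
      congr 1
      rw [mul_assoc, ← Real.exp_add,
        show -(β * x) + -(γ * x) = -((β + γ) * x) from by ring]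
      have hne : β + γ ≠ 0 := by positivity
      field_simp
    · simp only [Pi.mul_apply]
      rw [exponentialPDF_of_neg hx, exponentialPDF_of_neg hx, zero_mul, mul_zero]
  rw [lintegral_congr hpoint, lintegral_const_mul _
      (show Measurable (exponentialPDF (β + γ)) from
        (measurable_exponentialPDFReal (β + γ)).ennreal_ofReal),
    lintegral_exponentialPDF_eq_one (by positivity), mul_one]

end Stmt9Aux

open Stmt9Aux in
/-- For coordinated min-sketches of length `m` of nonempty subsets `A, B`
of a finite weighted set, built from independent variables `X x k ~ Exp(w x)`:
(i) if `A ⊆ B`, then `B_k ≤ A_k` for every position `k`, surely;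
(ii) if `A ⊄ B`, then `P(∃ k, B_k > A_k) = 1 - (w(B)/w(A ∪ B))^m`, and in particular
this probability is strictly positive. -/
theorem stmt_9
    {Ω : Type*} [MeasurableSpace Ω] (P : Measure Ω) [IsProbabilityMeasure P]
    {ι : Type*} [Fintype ι] [DecidableEq ι]
    (m : ℕ) (hm : 1 ≤ m)
    (w : ι → ℝ) (hw : ∀ x, 0 < w x)
    (X : ι → Fin m → Ω → ℝ) (hmeas : ∀ x k, Measurable (X x k))
    (hindep : iIndepFun (fun p : ι × Fin m => X p.1 p.2) P)
    (hdist : ∀ x k, Measure.map (X x k) P = expMeasure (w x))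
    (A B : Finset ι) (hA : A.Nonempty) (hB : B.Nonempty) :
    (A ⊆ B → ∀ (k : Fin m) (ω : Ω),
      B.inf' hB (fun x => X x k ω) ≤ A.inf' hA (fun x => X x k ω)) ∧
    (¬ A ⊆ B →
      P {ω | ∃ k : Fin m,
          A.inf' hA (fun x => X x k ω) < B.inf' hB (fun x => X x k ω)}
        = ENNReal.ofReal (1 - ((∑ x ∈ B, w x) / ∑ x ∈ A ∪ B, w x) ^ m) ∧
      0 < P {ω | ∃ k : Fin m,
          A.inf' hA (fun x => X x k ω) < B.inf' hB (fun x => X x k ω)}) := by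
  classical
  constructor
  · intro hsub k ω
    obtain ⟨a, haA, ha⟩ := A.exists_mem_eq_inf' hA (fun x => X x k ω)
    rw [ha]
    exact Finset.inf'_le _ (hsub haA)
  · intro hnsub
    have hC : (A \ B).Nonempty := by rwa [Finset.sdiff_nonempty]
    have hβ : 0 < ∑ x ∈ B, w x := Finset.sum_pos (fun x _ => hw x) hB
    have hγ : 0 < ∑ x ∈ A \ B, w x := Finset.sum_pos (fun x _ => hw x) hC
    have hdisj : Disjoint B (A \ B) := Finset.disjoint_sdiff
    have hsum : ∑ x ∈ A ∪ B, w x = (∑ x ∈ B, w x) + (∑ x ∈ A \ B, w x) := by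
      rw [← Finset.sdiff_union_self_eq_union, Finset.sum_union Finset.sdiff_disjoint, add_comm]
    set E : Fin m → Set Ω := fun k =>
      {ω | B.inf' hB (fun x => X x k ω) ≤ (A \ B).inf' hC (fun x => X x k ω)} with hEdef
    have hEprob : ∀ k, P (E k)
        = ENNReal.ofReal ((∑ x ∈ B, w x) / ((∑ x ∈ B, w x) + (∑ x ∈ A \ B, w x))) :=
      fun k => prob_min_le hmeas hindep hdist hw B (A \ B) hB hC hdisj k
    have hprod : ∀ S : Finset (Fin m), P (⋂ k ∈ S, E k) = ∏ k ∈ S, P (E k) := by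
      intro S
      induction S using Finset.induction_on with
      | empty => simp
      | @insert j S hj ih =>
        rw [Finset.set_biInter_insert, Finset.prod_insert hj, ← ih]
        have hdisjUT : Disjoint ((Finset.univ : Finset ι) ×ˢ ({j} : Finset (Fin m)))
            ((Finset.univ : Finset ι) ×ˢ S) := by
          simp only [Finset.disjoint_left, Finset.mem_product, Finset.mem_singleton]
          rintro ⟨x, k⟩ ⟨-, rfl⟩ ⟨-, hk2⟩
          exact hj hk2
        have hIF := hindep.indepFun_finset _ _ hdisjUT (fun p => hmeas p.1 p.2)
        have hmemU : ∀ x : ι, ((x, j) : ι × Fin m)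
            ∈ (Finset.univ : Finset ι) ×ˢ ({j} : Finset (Fin m)) := fun x =>
          Finset.mem_product.mpr ⟨Finset.mem_univ _, Finset.mem_singleton_self j⟩
        have hmemT : ∀ (k : Fin m), k ∈ S → ∀ x : ι, ((x, k) : ι × Fin m)
            ∈ (Finset.univ : Finset ι) ×ˢ S := fun k hk x =>
          Finset.mem_product.mpr ⟨Finset.mem_univ _, hk⟩
        set DU : Set (↥((Finset.univ : Finset ι) ×ˢ ({j} : Finset (Fin m))) → ℝ) :=
          {v | B.inf' hB (fun x => v ⟨(x, j), hmemU x⟩)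
            ≤ (A \ B).inf' hC (fun x => v ⟨(x, j), hmemU x⟩)} with hDU
        set DT : Set (↥((Finset.univ : Finset ι) ×ˢ S) → ℝ) := ⋂ (k : Fin m) (hk : k ∈ S),
          {v | B.inf' hB (fun x => v ⟨(x, k), hmemT k hk x⟩)
            ≤ (A \ B).inf' hC (fun x => v ⟨(x, k), hmemT k hk x⟩)} with hDT
        have hDUm : MeasurableSet DU :=
          measurableSet_le
            (measurable_finset_inf' hB _ (fun x => measurable_pi_apply _))
            (measurable_finset_inf' hC _ (fun x => measurable_pi_apply _))
        have hDTm : MeasurableSet DT :=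
          MeasurableSet.iInter fun k => MeasurableSet.iInter fun hk =>
            measurableSet_le
              (measurable_finset_inf' hB _ (fun x => measurable_pi_apply _))
              (measurable_finset_inf' hC _ (fun x => measurable_pi_apply _))
        have hEU : E j = (fun ω (i : ↥((Finset.univ : Finset ι) ×ˢ ({j} : Finset (Fin m)))) =>
            X i.1.1 i.1.2 ω) ⁻¹' DU := rfl
        have hET : (⋂ k ∈ S, E k)
            = (fun ω (i : ↥((Finset.univ : Finset ι) ×ˢ S)) => X i.1.1 i.1.2 ω) ⁻¹' DT := by
          ext ω
          simp only [Set.mem_iInter, Set.mem_preimage, hDT, hEdef, Set.mem_setOf_eq]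
        rw [hEU, hET, hIF.measure_inter_preimage_eq_mul DU DT hDUm hDTm]
    have hEmeas : ∀ k, MeasurableSet (E k) := fun k =>
      measurableSet_le (measurable_finset_inf' hB _ (fun x => hmeas x k))
        (measurable_finset_inf' hC _ (fun x => hmeas x k))
    have hsetE : {ω | ∃ k : Fin m,
          A.inf' hA (fun x => X x k ω) < B.inf' hB (fun x => X x k ω)}
        = (⋂ k, E k)ᶜ := by
      ext ω
      simp only [Set.mem_setOf_eq, Set.mem_compl_iff, Set.mem_iInter, not_forall, hEdef,
        Set.mem_setOf_eq, not_le]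
      constructor
      · rintro ⟨k, hk⟩
        refine ⟨k, ?_⟩
        obtain ⟨x, hxA, hx⟩ := (Finset.inf'_lt_iff hA).mp hk
        have hxB : x ∉ B := fun hxB => absurd hx (not_lt.mpr (Finset.inf'_le _ hxB))
        exact lt_of_le_of_lt (Finset.inf'_le _ (Finset.mem_sdiff.mpr ⟨hxA, hxB⟩)) hx
      · rintro ⟨k, hk⟩
        refine ⟨k, ?_⟩
        obtain ⟨x, hxC, hx⟩ := (Finset.inf'_lt_iff hC).mp hk
        exact (Finset.inf'_lt_iff hA).mpr ⟨x, (Finset.mem_sdiff.mp hxC).1, hx⟩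
    rw [hsetE]
    have hcap : P (⋂ k, E k)
        = (ENNReal.ofReal ((∑ x ∈ B, w x) / ((∑ x ∈ B, w x) + ∑ x ∈ A \ B, w x))) ^ m := by
      rw [show (⋂ k, E k) = ⋂ k ∈ Finset.univ, E k by simp, hprod Finset.univ,
        Finset.prod_congr rfl (fun k _ => hEprob k), Finset.prod_const, Finset.card_univ,
        Fintype.card_fin]
    have hcompl : P ((⋂ k, E k)ᶜ) = 1 - P (⋂ k, E k) := by
      rw [measure_compl (MeasurableSet.iInter hEmeas) (measure_ne_top _ _), measure_univ]
    set ρ : ℝ := (∑ x ∈ B, w x) / ((∑ x ∈ B, w x) + ∑ x ∈ A \ B, w x) with hρ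
    have hρ0 : 0 ≤ ρ := by positivity
    have hρ1 : ρ < 1 := by
      rw [hρ, div_lt_one (by positivity)]
      linarith
    have hρm : ρ ^ m < 1 := pow_lt_one₀ hρ0 hρ1 (by omega)
    have hratio : (∑ x ∈ B, w x) / (∑ x ∈ A ∪ B, w x) = ρ := by rw [hsum]
    have hmain : P ((⋂ k, E k)ᶜ) = ENNReal.ofReal (1 - ρ ^ m) := by
      rw [hcompl, hcap, ← ENNReal.ofReal_pow hρ0, ← ENNReal.ofReal_one,
        ← ENNReal.ofReal_sub _ (pow_nonneg hρ0 m)]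
    refine ⟨?_, ?_⟩
    · rw [hmain, hratio]
    · rw [hmain]
      exact ENNReal.ofReal_pos.mpr (by linarith)
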